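/- arXiv:1712.07104 — 4 statements merged into one kernel-verified Lean document; each statement's English description precedes it below -/
import Mathlib

section
/- Let E be a complex Banach space, n ∈ ℕ, r ∈ ℕ with r ≥ 1, and let f : (0, ∞) → E be continuous. Let p ∈ E and suppose there are C ≥ 0 and ε > 0 with ‖f(t) − p‖ ≤ C·exp(−ε t) for all t ≥ 1. Let q : ℕ → E and suppose that for every N ∈ ℕ there is C_N ≥ 0 such that ‖f(t) − Σ_{j=0}^{N−1} t^{(j−n)/r} • q_j‖ ≤ C_N · t^{(N−n)/r} for all t ∈ (0, 1]. Define q'_j := q_j for j ≠ n and q'_n := q_n − p. Then there exists F : ℂ → E such that: (i) F is differentiable (holomorphic) on ℂ \ {(n−j)/r : j ∈ ℕ}; (ii) for every z ∈ ℂ with Re(z) > n/r, the function t ↦ (t:ℂ)^{z−1} • (f(t) − p) is Bochner integrable on (0, ∞) and Γ(z) • F(z) = ∫_{(0,∞)} (t:ℂ)^{z−1} • (f(t) − p) dt; (iii) for every j ∈ ℕ, (z − (n−j)/r) • F(z) tends to (1/Γ((n−j)/r)) • q'_j as z → (n−j)/r within z ≠ (n−j)/r, where 1/Γ is the entire reciprocal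 Gamma function (so this limit is 0 when (n−j)/r is a non-positive integer); (iv) for every l ∈ ℕ, the function equal to F away from −l and to ((−1)^l · l!) • q'_{n+r·l} at −l is analytic at −l. -/
open MeasureTheory Filter Topology

section Stmt4Aux

open Set Complex

variable {E : Type*} [NormedAddCommGroup E] [NormedSpace ℂ E] [CompleteSpace E]

omit [NormedSpace ℂ E] [CompleteSpace E] in
lemma locIntOn_indicator {f : ℝ → E} {s t : Set ℝ} {μ : Measure ℝ}
    (hf : LocallyIntegrableOn f s μ) (ht : MeasurableSet t) :
    LocallyIntegrableOn (Set.indicator t f) s μ := by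
  intro x hx
  obtain ⟨s', hs', hint⟩ := hf x hx
  exact ⟨s', hs', hint.indicator ht⟩

lemma hasMellin_smul_const {φ : ℝ → ℂ} {s m : ℂ} (h : HasMellin φ s m) (v : E) :
    HasMellin (fun t => φ t • v) s (m • v) := by
  refine ⟨?_, ?_⟩
  · unfold MellinConvergent
    simp only [← smul_assoc, smul_eq_mul]
    exact h.1.smul_const v
  · rw [mellin]
    simp_rw [← smul_assoc, smul_eq_mul]
    rw [integral_smul_const, ← h.2]
    rfl

lemma hasMellin_rpow_smul (a : ℝ) (v : E) {s : ℂ} (hs : -a < s.re) :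
    HasMellin (Set.indicator (Set.Ioc 0 1) (fun t : ℝ => ((t ^ a : ℝ) : ℂ) • v)) s
      ((s + a)⁻¹ • v) := by
  have h1 := hasMellin_cpow_Ioc (a : ℂ) (s := s) (by simp only [Complex.ofReal_re]; linarith)
  have h2 := hasMellin_smul_const h1 v
  have hfn : (fun t => (Set.indicator (Set.Ioc 0 1) (fun t : ℝ => (t:ℂ) ^ (a:ℂ)) t) • v)
      = Set.indicator (Set.Ioc 0 1) (fun t : ℝ => ((t ^ a : ℝ) : ℂ) • v) := by
    funext t
    by_cases ht : t ∈ Set.Ioc (0:ℝ) 1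
    · rw [Set.indicator_of_mem ht, Set.indicator_of_mem ht, Complex.ofReal_cpow ht.1.le]
    · simp [Set.indicator_of_notMem ht]
  rw [hfn] at h2
  simpa [one_div] using h2

lemma one_div_Gamma_step (z : ℂ) : (Complex.Gamma z)⁻¹ = z * (Complex.Gamma (z + 1))⁻¹ := by
  rcases eq_or_ne z 0 with rfl | hz
  · simp [Complex.Gamma_zero]
  · rw [Complex.Gamma_add_one z hz, mul_inv, ← mul_assoc, mul_inv_cancel₀ hz, one_mul]

lemma one_div_Gamma_iter (k : ℕ) (z : ℂ) :
    (Complex.Gamma z)⁻¹ = (∏ i ∈ Finset.range k, (z + i)) * (Complex.Gamma (z + k))⁻¹ := by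
  induction k with
  | zero => simp
  | succ k ih =>
    have hc : z + ((k + 1 : ℕ) : ℂ) = (z + k) + 1 := by push_cast; ring
    rw [hc, ih, Finset.prod_range_succ, one_div_Gamma_step (z + k), mul_assoc]

lemma prod_range_sub_nat' (l : ℕ) : (∏ i ∈ Finset.range l, (l - i)) = l.factorial := by
  rw [← Finset.prod_range_reflect, ← Finset.prod_range_add_one_eq_factorial]
  apply Finset.prod_congr rfl
  intro j hj
  rw [Finset.mem_range] at hj
  omega

lemma prod_range_sub_cast (l : ℕ) :
    (∏ i ∈ Finset.range l, ((i:ℂ) - l)) = (-1)^l * (l.factorial : ℂ) := by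
  have h1 : ∀ i ∈ Finset.range l, ((i:ℂ) - l) = (-1) * (((l - i : ℕ) : ℂ)) := by
    intro i hi
    rw [Finset.mem_range] at hi
    rw [Nat.cast_sub hi.le]
    ring
  rw [Finset.prod_congr rfl h1, Finset.prod_mul_distrib, Finset.prod_const,
    ← Nat.cast_prod, prod_range_sub_nat']
  simp

end Stmt4Aux

/-- Analytic core of Theorem 2.3: meromorphic continuation of the Mellin transform of a
function `f` admitting a heat-kernel-type asymptotic expansion `Σ t^{(j-n)/r} q_j` as
`t → 0⁺` and converging exponentially fast to `p` as `t → ∞`.  The continuation `F` is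
holomorphic away from `(n-j)/r`, satisfies `Γ(z) F(z) = ∫_0^∞ t^{z-1}(f(t) - p) dt` for
`Re z > n/r`, has at most simple poles at `(n-j)/r` with residues `q'_j / Γ((n-j)/r)`
(interpreted via the entire reciprocal Gamma function), and takes the values
`(-1)^l l! q'_{n+rl}` at the points `-l`. -/
theorem stmt_4 {E : Type*} [NormedAddCommGroup E] [NormedSpace ℂ E] [CompleteSpace E]
    (n r : ℕ) (hr : 1 ≤ r)
    (f : ℝ → E) (hf : ContinuousOn f (Set.Ioi 0))
    (p : E) (C ε : ℝ) (hC : 0 ≤ C) (hε : 0 < ε)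
    (hlarge : ∀ t : ℝ, 1 ≤ t → ‖f t - p‖ ≤ C * Real.exp (-ε * t))
    (q : ℕ → E)
    (hsmall : ∀ N : ℕ, ∃ CN : ℝ, 0 ≤ CN ∧ ∀ t ∈ Set.Ioc (0 : ℝ) 1,
      ‖f t - ∑ j ∈ Finset.range N, ((t ^ (((j : ℝ) - n) / r) : ℝ) : ℂ) • q j‖
        ≤ CN * t ^ (((N : ℝ) - n) / r))
    (q' : ℕ → E) (hq' : ∀ j, j ≠ n → q' j = q j) (hq'n : q' n = q n - p) :
    ∃ F : ℂ → E,
      (∀ z : ℂ, (∀ j : ℕ, z ≠ ((n : ℂ) - j) / r) → DifferentiableAt ℂ F z) ∧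
      (∀ z : ℂ, (n : ℝ) / r < z.re →
        IntegrableOn (fun t : ℝ => (t : ℂ) ^ (z - 1) • (f t - p)) (Set.Ioi 0) ∧
        Complex.Gamma z • F z
          = ∫ t in Set.Ioi (0 : ℝ), (t : ℂ) ^ (z - 1) • (f t - p)) ∧
      (∀ j : ℕ, Tendsto (fun z : ℂ => (z - ((n : ℂ) - j) / r) • F z)
        (nhdsWithin (((n : ℂ) - j) / r) {((n : ℂ) - j) / r}ᶜ)
        (nhds ((Complex.Gamma (((n : ℂ) - j) / r))⁻¹ • q' j))) ∧
      (∀ l : ℕ, AnalyticAt ℂ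
        (Function.update F (-(l : ℂ))
          (((-1 : ℂ) ^ l * (l.factorial : ℂ)) • q' (n + r * l)))
        (-(l : ℂ))) := by
  classical
  have hr0 : (0:ℝ) < r := by exact_mod_cast hr
  have hrC : (r:ℂ) ≠ 0 := by exact_mod_cast hr0.ne'
  set cr : ℕ → ℝ := fun j => ((n:ℝ) - j) / r with hcr
  set c : ℕ → ℂ := fun j => ((n:ℂ) - j) / r with hc
  have hc_re : ∀ j, c j = ((cr j : ℝ) : ℂ) := by
    intro j; simp only [hc, hcr]; push_cast; ring
  have hcre : ∀ j, (c j).re = cr j := by intro j; rw [hc_re, Complex.ofReal_re]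
  have hcr_anti : ∀ {i j : ℕ}, i ≤ j → cr j ≤ cr i := by
    intro i j hij
    have hij' : (i:ℝ) ≤ j := by exact_mod_cast hij
    simp only [hcr]
    gcongr
  have hcr_le : ∀ j, cr j ≤ (n:ℝ)/r := by
    intro j
    simp only [hcr]
    gcongr
    simp
  have hc_inj : Function.Injective c := by
    intro i j hij
    simp only [hc] at hij
    rw [div_eq_div_iff hrC hrC] at hij
    have h2 := mul_right_cancel₀ hrC hij
    have h3 : (i:ℂ) = j := by linear_combination -h2
    exact_mod_cast h3
  set φ : ℕ → ℝ → E := fun j t => ((t ^ (((j:ℝ) - n) / r) : ℝ) : ℂ) • q j with hφ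
  set u : ℕ → ℝ → E := fun N t => f t - ∑ j ∈ Finset.range N, φ j t with hu
  set h : ℕ → ℝ → E := fun N => Set.indicator (Set.Ioc 0 1) (u N) with hh
  set ψ : ℕ → ℝ → E := fun j => Set.indicator (Set.Ioc 0 1) (φ j) with hψ
  set χ : ℝ → E := Set.indicator (Set.Ioc 0 1) (fun _ => p) with hχ
  set g1 : ℝ → E := Set.indicator (Set.Ioi 1) (fun t => f t - p) with hg1
  -- continuity and local integrability
  have hφcont : ∀ j, ContinuousOn (φ j) (Set.Ioi 0) := by
    intro j
    apply ContinuousOn.smul ?_ continuousOn_const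
    apply Complex.continuous_ofReal.comp_continuousOn
    intro t ht
    exact (Real.continuousAt_rpow_const t _ (Or.inl (ne_of_gt ht))).continuousWithinAt
  have hucont : ∀ N, ContinuousOn (u N) (Set.Ioi 0) := by
    intro N
    exact hf.sub (continuousOn_finset_sum _ fun j _ => hφcont j)
  have hhloc : ∀ N, LocallyIntegrableOn (h N) (Set.Ioi 0) := fun N =>
    locIntOn_indicator ((hucont N).locallyIntegrableOn measurableSet_Ioi) measurableSet_Ioc
  have hg1loc : LocallyIntegrableOn g1 (Set.Ioi 0) :=
    locIntOn_indicator ((hf.sub continuousOn_const).locallyIntegrableOn measurableSet_Ioi)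
      measurableSet_Ioi
  -- big-O bounds
  have hh_top : ∀ (N : ℕ) (a : ℝ), h N =O[atTop] (· ^ (-a)) := by
    intro N a
    rw [Asymptotics.isBigO_iff]
    refine ⟨0, ?_⟩
    filter_upwards [eventually_gt_atTop (1:ℝ)] with t ht
    have hnot : t ∉ Set.Ioc (0:ℝ) 1 := fun hm => absurd hm.2 (not_le.mpr ht)
    simp only [hh, Set.indicator_of_notMem hnot]
    simp
  have hh_bot : ∀ N : ℕ, h N =O[𝓝[>] (0:ℝ)] (· ^ (-(cr N))) := by
    intro N
    obtain ⟨CN, hCN0, hCN⟩ := hsmall N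
    have hE : -(cr N) = ((N:ℝ) - n)/r := by rw [hcr]; ring
    rw [Asymptotics.isBigO_iff]
    refine ⟨CN, ?_⟩
    filter_upwards [Ioc_mem_nhdsGT (zero_lt_one)] with t ht
    simp only [hh, Set.indicator_of_mem ht, hE]
    calc ‖u N t‖ ≤ CN * t ^ (((N:ℝ) - n)/r) := hCN t ht
      _ = CN * ‖t ^ (((N:ℝ)-n)/r)‖ := by
          rw [Real.norm_of_nonneg (Real.rpow_nonneg ht.1.le _)]
  have hg1_top : g1 =O[atTop] (fun t => Real.exp (-ε * t)) := by
    rw [Asymptotics.isBigO_iff]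
    refine ⟨C, ?_⟩
    filter_upwards [eventually_ge_atTop (1:ℝ)] with t ht
    rw [Real.norm_of_nonneg (Real.exp_pos _).le]
    by_cases h1 : t ∈ Set.Ioi (1:ℝ)
    · simp only [hg1, Set.indicator_of_mem h1]; exact hlarge t ht
    · simp only [hg1, Set.indicator_of_notMem h1]
      simp only [norm_zero]
      positivity
  have hg1_bot : ∀ b : ℝ, g1 =O[𝓝[>] (0:ℝ)] (· ^ (-b)) := by
    intro b
    rw [Asymptotics.isBigO_iff]
    refine ⟨0, ?_⟩
    filter_upwards [Ioc_mem_nhdsGT (zero_lt_one)] with t ht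
    have hnot : t ∉ Set.Ioi (1:ℝ) := fun hm => absurd ht.2 (not_le.mpr hm)
    simp only [hg1, Set.indicator_of_notMem hnot]
    simp
  -- convergence and differentiability of the mellin pieces
  have hconv_h : ∀ (N : ℕ) (z : ℂ), cr N < z.re → MellinConvergent (h N) z := fun N z hz =>
    mellinConvergent_of_isBigO_rpow (hhloc N) (hh_top N (z.re + 1)) (lt_add_one _) (hh_bot N) hz
  have hdiff_h : ∀ (N : ℕ) (z : ℂ), cr N < z.re → DifferentiableAt ℂ (mellin (h N)) z :=
    fun N z hz =>
    mellin_differentiableAt_of_isBigO_rpow (hhloc N) (hh_top N (z.re + 1)) (lt_add_one _)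
      (hh_bot N) hz
  have hconv_g1 : ∀ z : ℂ, MellinConvergent g1 z := fun z =>
    mellinConvergent_of_isBigO_rpow_exp hε hg1loc hg1_top (hg1_bot (z.re - 1)) (by linarith)
  have hdiff_g1 : ∀ z : ℂ, DifferentiableAt ℂ (mellin g1) z := fun z =>
    mellin_differentiableAt_of_isBigO_rpow_exp hε hg1loc hg1_top (hg1_bot (z.re - 1))
      (by linarith)
  -- mellin of the model pieces
  have hψmellin : ∀ (j : ℕ) (z : ℂ), cr j < z.re → HasMellin (ψ j) z ((z - c j)⁻¹ • q j) := by
    intro j z hz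
    have ha : -(((j:ℝ) - n)/r) < z.re := by
      have : -(((j:ℝ) - n)/r) = cr j := by rw [hcr]; ring
      rw [this]; exact hz
    have h1 := hasMellin_rpow_smul (((j:ℝ) - n)/r) (q j) ha
    have harg : z + (((((j:ℝ) - n)/r) : ℝ) : ℂ) = z - c j := by
      rw [hc]; push_cast; ring
    rw [harg] at h1
    exact h1
  have hχmellin : ∀ z : ℂ, 0 < z.re → HasMellin χ z (z⁻¹ • p) := by
    intro z hz
    have h1 := hasMellin_smul_const (hasMellin_one_Ioc hz) p
    have hfn : (fun t => (Set.indicator (Set.Ioc 0 1) (fun _ => (1:ℂ)) t) • p) = χ := by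
      funext t
      by_cases ht : t ∈ Set.Ioc (0:ℝ) 1 <;>
        simp [hχ, Set.indicator_of_mem, Set.indicator_of_notMem, ht]
    rw [hfn] at h1
    simpa [one_div] using h1
  -- pointwise decomposition
  have hpt : ∀ (M : ℕ) (t : ℝ), 0 < t →
      f t - p = h M t + (∑ j ∈ Finset.range M, ψ j t) - χ t + g1 t := by
    intro M t ht
    by_cases ht1 : t ≤ 1
    · have hmem : t ∈ Set.Ioc (0:ℝ) 1 := ⟨ht, ht1⟩
      have hnot : t ∉ Set.Ioi (1:ℝ) := by simpa using ht1
      simp only [hh, hψ, hχ, hg1, Set.indicator_of_mem hmem, Set.indicator_of_notMem hnot, hu]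
      abel
    · have hnot : t ∉ Set.Ioc (0:ℝ) 1 := fun hm => ht1 hm.2
      have hmem : t ∈ Set.Ioi (1:ℝ) := not_le.mp ht1
      simp only [hh, hψ, hχ, hg1, Set.indicator_of_notMem hnot, Set.indicator_of_mem hmem]
      simp
  -- gluing step
  have hstep : ∀ (M M' : ℕ), M ≤ M' → ∀ z : ℂ, cr M < z.re →
      mellin (h M) z = mellin (h M') z + ∑ j ∈ Finset.Ico M M', (z - c j)⁻¹ • q j := by
    intro M M' hMM' z hz
    have hconvs : ∀ j ∈ Finset.Ico M M', MellinConvergent (ψ j) z := fun j hj =>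
      (hψmellin j z (lt_of_le_of_lt (hcr_anti (Finset.mem_Ico.mp hj).1) hz)).1
    have hpt2 : h M = fun t => h M' t + ∑ j ∈ Finset.Ico M M', ψ j t := by
      funext t
      by_cases hm : t ∈ Set.Ioc (0:ℝ) 1
      · simp only [hh, hψ, Set.indicator_of_mem hm, hu]
        rw [← Finset.sum_range_add_sum_Ico _ hMM']
        abel
      · simp [hh, hψ, Set.indicator_of_notMem hm]
    have hconvM' : MellinConvergent (h M') z := hconv_h M' z (lt_of_le_of_lt (hcr_anti hMM') hz)
    rw [hpt2, mellin]
    simp_rw [smul_add, Finset.smul_sum]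
    rw [integral_add hconvM' (integrable_finset_sum _ hconvs), integral_finset_sum _ hconvs]
    congr 1
    exact Finset.sum_congr rfl fun j hj =>
      (hψmellin j z (lt_of_le_of_lt (hcr_anti (Finset.mem_Ico.mp hj).1) hz)).2
  -- the continuation
  set Nz : ℂ → ℕ := fun z => n + r * (⌊-z.re⌋₊ + 1) with hNzdef
  have hNz_gt : ∀ z : ℂ, n < Nz z := by
    intro z
    have : 0 < r * (⌊-z.re⌋₊ + 1) := Nat.mul_pos hr (Nat.succ_pos _)
    simp only [hNzdef]
    omega
  have hNz_lt : ∀ z : ℂ, cr (Nz z) < z.re := by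
    intro z
    have h1 : -z.re < ((⌊-z.re⌋₊ : ℝ) + 1) := Nat.lt_floor_add_one (-z.re)
    have h2 : cr (Nz z) = -(((⌊-z.re⌋₊ : ℝ)) + 1) := by
      simp only [hcr, hNzdef]
      push_cast
      rw [div_eq_iff (ne_of_gt hr0)]
      ring
    rw [h2]; linarith
  set G : ℂ → E := fun z =>
    (∑ j ∈ Finset.range (Nz z), (z - c j)⁻¹ • q' j) + mellin (h (Nz z)) z + mellin g1 z with hG
  set F : ℂ → E := fun z => (Complex.Gamma z)⁻¹ • G z with hF
  have hGeq : ∀ (M : ℕ) (z : ℂ), n < M → cr M < z.re →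
      G z = (∑ j ∈ Finset.range M, (z - c j)⁻¹ • q' j) + mellin (h M) z + mellin g1 z := by
    intro M z hnM hMz
    have key : ∀ (M₁ : ℕ), n < M₁ → M₁ ≤ max M (Nz z) → cr M₁ < z.re →
        (∑ j ∈ Finset.range M₁, (z - c j)⁻¹ • q' j) + mellin (h M₁) z
          = (∑ j ∈ Finset.range (max M (Nz z)), (z - c j)⁻¹ • q' j)
            + mellin (h (max M (Nz z))) z := by
      intro M₁ hnM₁ hle hM₁z
      rw [hstep M₁ (max M (Nz z)) hle z hM₁z,
        ← Finset.sum_range_add_sum_Ico (fun j => (z - c j)⁻¹ • q' j) hle]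
      have hqq : ∑ j ∈ Finset.Ico M₁ (max M (Nz z)), (z - c j)⁻¹ • q' j
          = ∑ j ∈ Finset.Ico M₁ (max M (Nz z)), (z - c j)⁻¹ • q j :=
        Finset.sum_congr rfl fun j hj => by
          rw [hq' j (by have := (Finset.mem_Ico.mp hj).1; omega)]
      rw [hqq]
      abel
    have h1 := key M hnM (le_max_left _ _) hMz
    have h2 := key (Nz z) (hNz_gt z) (le_max_right _ _) (hNz_lt z)
    simp only [hG]
    congr 1
    rw [h2, h1]
  refine ⟨F, ?_, ?_, ?_, ?_⟩
  · -- (i) differentiability away from the poles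
    intro z hz
    have hz' : ∀ j : ℕ, z ≠ c j := hz
    have hopen : IsOpen {w : ℂ | cr (Nz z) < w.re} :=
      isOpen_lt continuous_const Complex.continuous_re
    have hmem : z ∈ {w : ℂ | cr (Nz z) < w.re} := hNz_lt z
    have hev : G =ᶠ[𝓝 z] fun w =>
        (∑ j ∈ Finset.range (Nz z), (w - c j)⁻¹ • q' j) + mellin (h (Nz z)) w + mellin g1 w :=
      Filter.eventuallyEq_of_mem (hopen.mem_nhds hmem) (fun w hw => hGeq (Nz z) w (hNz_gt z) hw)
    have hd1 : DifferentiableAt ℂ (fun w =>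
        (∑ j ∈ Finset.range (Nz z), (w - c j)⁻¹ • q' j) + mellin (h (Nz z)) w
          + mellin g1 w) z := by
      apply DifferentiableAt.add
      apply DifferentiableAt.add
      · apply DifferentiableAt.fun_sum (A := fun j w => (w - c j)⁻¹ • q' j)
        intro j hj
        exact (((differentiableAt_id.sub (differentiableAt_const (c j)) : DifferentiableAt ℂ (fun w => w - c j) _)).inv
          (sub_ne_zero.mpr (hz' j))).smul_const _
      · exact hdiff_h (Nz z) z (hNz_lt z)
      · exact hdiff_g1 z
    have hGdiff : DifferentiableAt ℂ G z := hd1.congr_of_eventuallyEq hev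
    rw [hF]
    exact (Complex.differentiable_one_div_Gamma z).smul hGdiff
  · -- (ii) the integral formula on the halfplane
    intro z hz
    have hz0 : 0 < z.re := lt_of_le_of_lt (by positivity) hz
    have hMn : n < Nz z := hNz_gt z
    have hcrM : cr (Nz z) < z.re := hNz_lt z
    have hconv1 : MellinConvergent (h (Nz z)) z := hconv_h (Nz z) z hcrM
    have hconvψ : ∀ j ∈ Finset.range (Nz z), MellinConvergent (ψ j) z := fun j _ =>
      (hψmellin j z (lt_of_le_of_lt (hcr_le j) hz)).1
    have hconvχ : MellinConvergent χ z := (hχmellin z hz0).1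
    have hconvg1 : MellinConvergent g1 z := hconv_g1 z
    have hs : Integrable (fun t : ℝ => ∑ j ∈ Finset.range (Nz z), (t:ℂ)^(z-1) • ψ j t)
        (volume.restrict (Set.Ioi 0)) := integrable_finset_sum _ hconvψ
    have hcomb : Set.EqOn (fun t : ℝ => (t:ℂ)^(z-1) • (f t - p))
        (fun t : ℝ => (t:ℂ)^(z-1) • h (Nz z) t + (∑ j ∈ Finset.range (Nz z), (t:ℂ)^(z-1) • ψ j t)
          - (t:ℂ)^(z-1) • χ t + (t:ℂ)^(z-1) • g1 t) (Set.Ioi 0) := by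
      intro t ht
      simp only
      rw [hpt (Nz z) t (Set.mem_Ioi.mp ht)]
      simp only [smul_add, smul_sub, Finset.smul_sum]
    have hIcomb : IntegrableOn (fun t : ℝ => (t:ℂ)^(z-1) • h (Nz z) t
        + (∑ j ∈ Finset.range (Nz z), (t:ℂ)^(z-1) • ψ j t)
        - (t:ℂ)^(z-1) • χ t + (t:ℂ)^(z-1) • g1 t) (Set.Ioi 0) :=
      ((hconv1.add hs).sub hconvχ).add hconvg1
    have hIOn : IntegrableOn (fun t : ℝ => (t:ℂ)^(z-1) • (f t - p)) (Set.Ioi 0) :=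
      hIcomb.congr_fun hcomb.symm measurableSet_Ioi
    refine ⟨hIOn, ?_⟩
    have hval : ∫ t in Set.Ioi (0:ℝ), (t:ℂ)^(z-1) • (f t - p)
        = mellin (h (Nz z)) z + (∑ j ∈ Finset.range (Nz z), mellin (ψ j) z)
          - mellin χ z + mellin g1 z := by
      have I2 : Integrable (fun x : ℝ => (x:ℂ)^(z-1) • h (Nz z) x
          + ∑ j ∈ Finset.range (Nz z), (x:ℂ)^(z-1) • ψ j x)
          (volume.restrict (Set.Ioi 0)) := hconv1.add hs
      have I3 : Integrable (fun x : ℝ => (x:ℂ)^(z-1) • h (Nz z) x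
          + ∑ j ∈ Finset.range (Nz z), (x:ℂ)^(z-1) • ψ j x - (x:ℂ)^(z-1) • χ x)
          (volume.restrict (Set.Ioi 0)) := I2.sub hconvχ
      rw [MeasureTheory.setIntegral_congr_fun measurableSet_Ioi hcomb,
        integral_add I3 hconvg1,
        integral_sub I2 hconvχ,
        integral_add hconv1 hs,
        integral_finset_sum _ hconvψ]
      simp only [mellin]
    have hΓ : Complex.Gamma z ≠ 0 := by
      apply Complex.Gamma_ne_zero
      intro m hm
      rw [hm] at hz0
      simp only [Complex.neg_re, Complex.natCast_re] at hz0
      have := Nat.cast_nonneg (α := ℝ) m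
      linarith
    have hdiffsum : ∑ j ∈ Finset.range (Nz z),
        ((z - c j)⁻¹ • q j - (z - c j)⁻¹ • q' j) = z⁻¹ • p := by
      rw [Finset.sum_eq_single n]
      · have hcn : c n = 0 := by simp [hc]
        rw [hq'n, hcn, sub_zero, ← smul_sub]
        congr 1
        abel
      · intro j _ hjn
        rw [hq' j hjn, sub_self]
      · intro hn
        exact absurd (Finset.mem_range.mpr (by omega)) hn
    have hsum_eq : ∑ j ∈ Finset.range (Nz z), (z - c j)⁻¹ • q' j
        = (∑ j ∈ Finset.range (Nz z), (z - c j)⁻¹ • q j) - z⁻¹ • p := by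
      have h2 : (∑ j ∈ Finset.range (Nz z), (z - c j)⁻¹ • q j)
          - ∑ j ∈ Finset.range (Nz z), (z - c j)⁻¹ • q' j = z⁻¹ • p := by
        rw [← Finset.sum_sub_distrib]
        exact hdiffsum
      rw [← h2]
      abel
    have hψval : ∀ j ∈ Finset.range (Nz z), mellin (ψ j) z = (z - c j)⁻¹ • q j := fun j _ =>
      (hψmellin j z (lt_of_le_of_lt (hcr_le j) hz)).2
    calc Complex.Gamma z • F z = G z := by
          rw [hF]
          simp only
          rw [smul_smul, mul_inv_cancel₀ hΓ, one_smul]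
      _ = (∑ j ∈ Finset.range (Nz z), (z - c j)⁻¹ • q' j) + mellin (h (Nz z)) z
            + mellin g1 z := by rw [hG]
      _ = ((∑ j ∈ Finset.range (Nz z), (z - c j)⁻¹ • q j) - z⁻¹ • p) + mellin (h (Nz z)) z
            + mellin g1 z := by rw [hsum_eq]
      _ = mellin (h (Nz z)) z + (∑ j ∈ Finset.range (Nz z), mellin (ψ j) z)
            - mellin χ z + mellin g1 z := by
          rw [Finset.sum_congr rfl hψval, (hχmellin z hz0).2]
          abel
      _ = ∫ t in Set.Ioi (0:ℝ), (t:ℂ)^(z-1) • (f t - p) := hval.symm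

  · -- (iii) simple poles with the stated residues
    intro j₀
    show Tendsto (fun w : ℂ => (w - c j₀) • F w) (nhdsWithin (c j₀) {c j₀}ᶜ)
      (nhds ((Complex.Gamma (c j₀))⁻¹ • q' j₀))
    have hrpos : 0 < r := hr
    set M : ℕ := n + r * (j₀ + 1) with hMdef
    have hnM : n < M := by
      have : 0 < r * (j₀ + 1) := Nat.mul_pos hrpos (Nat.succ_pos _)
      omega
    have hj₀M : j₀ < M := by
      have h1 : j₀ + 1 ≤ r * (j₀ + 1) := Nat.le_mul_of_pos_left _ hrpos
      omega
    have hcrlt : cr M < cr j₀ := by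
      have h2 : (j₀:ℝ) < (M:ℝ) := by exact_mod_cast hj₀M
      simp only [hcr]
      gcongr
    have hremem : cr M < (c j₀).re := by rw [hcre]; exact hcrlt
    have hopen : IsOpen {w : ℂ | cr M < w.re} :=
      isOpen_lt continuous_const Complex.continuous_re
    have hFw : ∀ w : ℂ, cr M < w.re → w ≠ c j₀ → (w - c j₀) • F w
        = (w - c j₀) • ((Complex.Gamma w)⁻¹
            • ((∑ j ∈ (Finset.range M).erase j₀, (w - c j)⁻¹ • q' j)
              + mellin (h M) w + mellin g1 w))
          + (Complex.Gamma w)⁻¹ • q' j₀ := by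
      intro w hw hwne
      have hsplit : (∑ j ∈ Finset.range M, (w - c j)⁻¹ • q' j)
          = (w - c j₀)⁻¹ • q' j₀ + ∑ j ∈ (Finset.range M).erase j₀, (w - c j)⁻¹ • q' j :=
        (Finset.add_sum_erase _ _ (Finset.mem_range.mpr hj₀M)).symm
    -- rewrite F w
      rw [hF]
      simp only
      rw [hGeq M w hnM hw, hsplit]
      have hre : ((w - c j₀)⁻¹ • q' j₀ + ∑ j ∈ (Finset.range M).erase j₀, (w - c j)⁻¹ • q' j)
            + mellin (h M) w + mellin g1 w
          = ((∑ j ∈ (Finset.range M).erase j₀, (w - c j)⁻¹ • q' j)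
              + mellin (h M) w + mellin g1 w) + (w - c j₀)⁻¹ • q' j₀ := by abel
      rw [hre, smul_add, smul_add, smul_smul, smul_smul, smul_smul,
        mul_comm (w - c j₀) ((Complex.Gamma w)⁻¹), mul_assoc,
        mul_inv_cancel₀ (sub_ne_zero.mpr hwne), mul_one]
    have hTdiff : DifferentiableAt ℂ (fun w =>
        (∑ j ∈ (Finset.range M).erase j₀, (w - c j)⁻¹ • q' j)
          + mellin (h M) w + mellin g1 w) (c j₀) := by
      apply DifferentiableAt.add
      apply DifferentiableAt.add
      · apply DifferentiableAt.fun_sum (A := fun j w => (w - c j)⁻¹ • q' j)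
        intro j hj
        have hne : c j₀ ≠ c j := fun hcc => Finset.ne_of_mem_erase hj (hc_inj hcc).symm
        exact (((differentiableAt_id.sub (differentiableAt_const (c j)) : DifferentiableAt ℂ (fun w => w - c j) _)).inv
          (sub_ne_zero.mpr hne)).smul_const _
      · exact hdiff_h M (c j₀) hremem
      · exact hdiff_g1 (c j₀)
    have hcont1 : ContinuousAt (fun w : ℂ => (w - c j₀) • ((Complex.Gamma w)⁻¹
        • ((∑ j ∈ (Finset.range M).erase j₀, (w - c j)⁻¹ • q' j)
          + mellin (h M) w + mellin g1 w))) (c j₀) :=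
      ((continuous_id.sub continuous_const).continuousAt).smul
        (((Complex.differentiable_one_div_Gamma (c j₀)).continuousAt).smul
          hTdiff.continuousAt)
    have hlim1 : Tendsto (fun w : ℂ => (w - c j₀) • ((Complex.Gamma w)⁻¹
        • ((∑ j ∈ (Finset.range M).erase j₀, (w - c j)⁻¹ • q' j)
          + mellin (h M) w + mellin g1 w))) (nhdsWithin (c j₀) {c j₀}ᶜ) (nhds 0) := by
      have h0 := hcont1.tendsto
      rw [sub_self, zero_smul] at h0
      exact tendsto_nhdsWithin_of_tendsto_nhds h0
    have hlim2 : Tendsto (fun w : ℂ => (Complex.Gamma w)⁻¹ • q' j₀)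
        (nhdsWithin (c j₀) {c j₀}ᶜ) (nhds ((Complex.Gamma (c j₀))⁻¹ • q' j₀)) :=
      tendsto_nhdsWithin_of_tendsto_nhds
        (((Complex.differentiable_one_div_Gamma (c j₀)).continuousAt.smul
          continuousAt_const).tendsto)
    have hcomb := hlim1.add hlim2
    rw [zero_add] at hcomb
    refine Tendsto.congr' ?_ hcomb
    have hS : {w : ℂ | cr M < w.re} ∈ nhdsWithin (c j₀) {c j₀}ᶜ :=
      nhdsWithin_le_nhds (hopen.mem_nhds hremem)
    filter_upwards [hS, self_mem_nhdsWithin] with w hw hwne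
    exact (hFw w hw hwne).symm
  · -- (iv) analytic extension at the non-positive integers
    intro l₀
    have hrpos : 0 < r := hr
    set j₀ : ℕ := n + r * l₀ with hj₀def
    set M : ℕ := n + r * (l₀ + 1) with hMdef
    have hnM : n < M := by
      have : 0 < r * (l₀ + 1) := Nat.mul_pos hrpos (Nat.succ_pos _)
      omega
    have hj₀M : j₀ < M := by
      have : r * (l₀ + 1) = r * l₀ + r := by ring
      omega
    have hcj₀ : c j₀ = -(l₀ : ℂ) := by
      simp only [hc, hj₀def]
      rw [div_eq_iff hrC]
      push_cast
      ring
    have hreM : cr M < (-(l₀:ℂ)).re := by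
      have h1 : cr M = -((l₀:ℝ) + 1) := by
        simp only [hcr, hMdef]
        rw [div_eq_iff (ne_of_gt hr0)]
        push_cast
        ring
      rw [h1]
      simp only [Complex.neg_re, Complex.natCast_re]
      linarith
    set S : Set ℂ := {w : ℂ | cr M < w.re} ∩ ⋂ j ∈ (Finset.range M).erase j₀, {w : ℂ | w ≠ c j}
      with hSdef
    have hSopen : IsOpen S := by
      apply IsOpen.inter (isOpen_lt continuous_const Complex.continuous_re)
      exact isOpen_biInter_finset fun j _ => isOpen_ne
    have hSmem : -(l₀:ℂ) ∈ S := by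
      refine ⟨hreM, ?_⟩
      rw [Set.mem_iInter₂]
      intro j hj
      show -(l₀:ℂ) ≠ c j
      rw [← hcj₀]
      exact fun hcc => Finset.ne_of_mem_erase hj (hc_inj hcc).symm
    set d : ℂ → ℂ := fun w => (∏ i ∈ Finset.range l₀, (w + i)) * (Complex.Gamma (w + l₀ + 1))⁻¹
      with hd
    have hdid : ∀ w : ℂ, w ≠ -(l₀:ℂ) →
        (Complex.Gamma w)⁻¹ * (w - c j₀)⁻¹ = d w := by
      intro w hw
      have hwl : w + (l₀:ℂ) ≠ 0 := by
        intro h0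
        exact hw (by linear_combination h0)
      have h1 := one_div_Gamma_iter (l₀ + 1) w
      have hcast : w + ((l₀ + 1 : ℕ) : ℂ) = w + l₀ + 1 := by push_cast; ring
      rw [Finset.prod_range_succ, hcast] at h1
      rw [hcj₀, sub_neg_eq_add, h1, hd]
      simp only
      rw [show (∏ i ∈ Finset.range l₀, (w + i)) * (w + l₀) * (Complex.Gamma (w + l₀ + 1))⁻¹
            * (w + l₀)⁻¹
          = (∏ i ∈ Finset.range l₀, (w + i)) * (Complex.Gamma (w + l₀ + 1))⁻¹
            * ((w + l₀) * (w + l₀)⁻¹) from by ring,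
        mul_inv_cancel₀ hwl, mul_one]
    have hdval : d (-(l₀:ℂ)) = (-1:ℂ)^l₀ * (l₀.factorial : ℂ) := by
      rw [hd]
      simp only
      rw [show -(l₀:ℂ) + l₀ + 1 = 1 from by ring, Complex.Gamma_one, inv_one, mul_one]
      rw [Finset.prod_congr rfl (fun i (_ : i ∈ Finset.range l₀) =>
        show -(l₀:ℂ) + i = (i:ℂ) - l₀ from by ring)]
      exact prod_range_sub_cast l₀
    set K : ℂ → E := fun w => (Complex.Gamma w)⁻¹
        • ((∑ j ∈ (Finset.range M).erase j₀, (w - c j)⁻¹ • q' j)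
          + mellin (h M) w + mellin g1 w) + d w • q' j₀ with hK
    have hKdiff : ∀ w ∈ S, DifferentiableAt ℂ K w := by
      intro w hw
      obtain ⟨hw1, hw2⟩ := hw
      rw [hK]
      apply DifferentiableAt.add
      · apply (Complex.differentiable_one_div_Gamma w).smul
        apply DifferentiableAt.add
        apply DifferentiableAt.add
        · apply DifferentiableAt.fun_sum (A := fun j w => (w - c j)⁻¹ • q' j)
          intro j hj
          have hne : w ≠ c j := Set.mem_iInter₂.mp hw2 j hj
          exact (((differentiableAt_id.sub (differentiableAt_const (c j)) : DifferentiableAt ℂ (fun w => w - c j) _)).inv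
            (sub_ne_zero.mpr hne)).smul_const _
        · exact hdiff_h M w hw1
        · exact hdiff_g1 w
      · apply DifferentiableAt.smul_const
        apply DifferentiableAt.mul
        · exact DifferentiableAt.fun_finsetProd fun i _ => differentiableAt_id.add_const _
        · have hcomp := (Complex.differentiable_one_div_Gamma (w + l₀ + 1)).comp w
            ((differentiableAt_id.add_const (l₀:ℂ)).add_const (1:ℂ))
          exact hcomp
    have hKanalytic : AnalyticAt ℂ K (-(l₀:ℂ)) :=
      DifferentiableOn.analyticAt (fun w hw => (hKdiff w hw).differentiableWithinAt)
        (hSopen.mem_nhds hSmem)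
    have hFK : ∀ w : ℂ, cr M < w.re → w ≠ -(l₀:ℂ) → F w = K w := by
      intro w hw hwne
      have hwne' : w ≠ c j₀ := by rw [hcj₀]; exact hwne
      have hsplit : (∑ j ∈ Finset.range M, (w - c j)⁻¹ • q' j)
          = (w - c j₀)⁻¹ • q' j₀ + ∑ j ∈ (Finset.range M).erase j₀, (w - c j)⁻¹ • q' j :=
        (Finset.add_sum_erase _ _ (Finset.mem_range.mpr hj₀M)).symm
      rw [hF, hK]
      simp only
      rw [hGeq M w hnM hw, hsplit]
      have hre : ((w - c j₀)⁻¹ • q' j₀ + ∑ j ∈ (Finset.range M).erase j₀, (w - c j)⁻¹ • q' j)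
            + mellin (h M) w + mellin g1 w
          = ((∑ j ∈ (Finset.range M).erase j₀, (w - c j)⁻¹ • q' j)
              + mellin (h M) w + mellin g1 w) + (w - c j₀)⁻¹ • q' j₀ := by abel
      rw [hre, smul_add, smul_smul, hdid w hwne]
    have hval' : Function.update F (-(l₀:ℂ)) (((-1:ℂ)^l₀ * (l₀.factorial : ℂ)) • q' j₀)
        =ᶠ[𝓝 (-(l₀:ℂ))] K := by
      filter_upwards [hSopen.mem_nhds hSmem] with w hw
      rcases eq_or_ne w (-(l₀:ℂ)) with rfl | hwne
      · rw [Function.update_self]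
        have hg0 : (Complex.Gamma (-(l₀:ℂ)))⁻¹ = 0 := by
          rw [Complex.Gamma_neg_nat_eq_zero, inv_zero]
        rw [hK]
        simp only
        rw [hg0, zero_smul, zero_add, hdval]
      · rw [Function.update_of_ne hwne]
        exact hFK w hw.1 hwne
    exact hKanalytic.congr hval'.symm
end

section
/- Let λ : ℕ → ℝ with λ_j ≥ 0 for all j, and suppose that for every t > 0 the series θ(t) := Σ_j exp(−t λ_j) converges. Let k be the (necessarily finite) number of indices j with λ_j = 0, and let n, r > 0 be real numbers and C ≥ 0 with θ(t) ≤ C·t^{−n/r} for all t ∈ (0, 1]. Then for every z ∈ ℂ with Re(z) > n/r: the series Σ_{j : λ_j > 0} λ_j^{−z} converges absolutely, the function t ↦ (t:ℂ)^{z−1} · (θ(t) − k) is integrable on (0, ∞), and Σ_{j : λ_j > 0} λ_j^{−z} = (1/Γ(z)) · ∫_{(0,∞)} (t:ℂ)^{z−1} · (θ(t) − k) dt. -/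
open MeasureTheory

/-- Mellin-transform identity for the spectral zeta function: for a non-negative
eigenvalue sequence `λ_j` whose heat trace `θ(t) = Σ_j e^{-t λ_j}` converges and
satisfies `θ(t) ≤ C t^{-n/r}` on `(0,1]`, and `k` the (necessarily finite) number of
zero eigenvalues, one has, for `Re z > n/r`, absolute convergence of `Σ_{λ_j > 0} λ_j^{-z}`,
integrability of `t ↦ t^{z-1}(θ(t) - k)` on `(0, ∞)`, and
`Σ_{λ_j > 0} λ_j^{-z} = Γ(z)⁻¹ ∫_0^∞ t^{z-1}(θ(t) - k) dt`. -/
theorem stmt_5 (lam : ℕ → ℝ) (hlam : ∀ j, 0 ≤ lam j)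
    (hsum : ∀ t : ℝ, 0 < t → Summable fun j => Real.exp (-t * lam j))
    (k : ℕ) (hkfin : {j : ℕ | lam j = 0}.Finite)
    (hk : Nat.card {j : ℕ | lam j = 0} = k)
    (n r : ℝ) (hn : 0 < n) (hr : 0 < r) (C : ℝ) (hC : 0 ≤ C)
    (hθ : ∀ t ∈ Set.Ioc (0 : ℝ) 1,
      (∑' j, Real.exp (-t * lam j)) ≤ C * t ^ (-(n / r))) :
    ∀ z : ℂ, n / r < z.re →
      (Summable fun j : {j : ℕ // 0 < lam j} => ‖(lam j.1 : ℂ) ^ (-z)‖) ∧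
      IntegrableOn (fun t : ℝ =>
        (t : ℂ) ^ (z - 1) * (((∑' j, Real.exp (-t * lam j)) - k : ℝ) : ℂ)) (Set.Ioi 0) ∧
      ∑' j : {j : ℕ // 0 < lam j}, (lam j.1 : ℂ) ^ (-z)
        = (Complex.Gamma z)⁻¹ * ∫ t in Set.Ioi (0 : ℝ),
            (t : ℂ) ^ (z - 1) * (((∑' j, Real.exp (-t * lam j)) - k : ℝ) : ℂ) := by
  intro z hz
  classical
  have hnr : 0 < n / r := div_pos hn hr
  have hs0 : 0 < z.re := hnr.trans hz
  -- Step 1: decomposition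
  have key : ∀ t : ℝ, 0 < t →
      HasSum (fun i : {j : ℕ // 0 < lam j} => Real.exp (-t * lam i.1))
        ((∑' j, Real.exp (-t * lam j)) - k) := by
    intro t ht
    have hsm := hsum t ht
    have hsub : Summable (fun i : {j : ℕ // 0 < lam j} => Real.exp (-t * lam i.1)) :=
      hsm.subtype {j : ℕ | 0 < lam j}
    have hdec := Summable.sum_add_tsum_compl (s := hkfin.toFinset)
      (f := fun j => Real.exp (-t * lam j)) hsm
    have hzero : ∑ j ∈ hkfin.toFinset, Real.exp (-t * lam j) = (k : ℝ) := by
      rw [Finset.sum_congr rfl (fun j hj => ?_), Finset.sum_const, nsmul_eq_mul, mul_one]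
      · rw [← hk, Nat.card_eq_card_finite_toFinset hkfin]
      · rw [hkfin.mem_toFinset.mp hj, mul_zero, Real.exp_zero]
    have he : ∑' (x : ↑(↑hkfin.toFinset : Set ℕ)ᶜ), Real.exp (-t * lam ↑x)
        = ∑' i : {j : ℕ // 0 < lam j}, Real.exp (-t * lam i.1) := by
      refine (Equiv.tsum_eq (Equiv.subtypeEquivRight fun j => ?_) _).symm
      simp only [Set.mem_compl_iff, Finset.mem_coe, Set.Finite.mem_toFinset, Set.mem_setOf_eq]
      exact ⟨fun h => h.ne', fun h => (hlam j).lt_of_ne (Ne.symm h)⟩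
    have heq : ∑' i : {j : ℕ // 0 < lam j}, Real.exp (-t * lam i.1)
        = (∑' j, Real.exp (-t * lam j)) - k := by
      rw [← he, ← hdec, hzero]; ring
    exact heq ▸ hsub.hasSum
  have hg0 : ∀ t : ℝ, 0 < t → 0 ≤ (∑' j, Real.exp (-t * lam j)) - k := fun t ht => by
    rw [← (key t ht).tsum_eq]
    exact tsum_nonneg fun i => (Real.exp_nonneg _)
  -- Step 2: spectral gap δ
  obtain ⟨δ, hδ0, hδ1, hδle⟩ : ∃ δ : ℝ, 0 < δ ∧ δ ≤ 1 ∧ ∀ j, 0 < lam j → δ ≤ lam j := by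
    have h1 : Filter.Tendsto (fun j => Real.exp (-1 * lam j)) Filter.atTop (nhds 0) :=
      (hsum 1 one_pos).tendsto_atTop_zero
    obtain ⟨N, hN⟩ : ∃ N, ∀ j ≥ N, Real.exp (-1 * lam j) < Real.exp (-1) :=
      Filter.eventually_atTop.mp (h1.eventually_lt_const (Real.exp_pos (-1)))
    set F : Finset ℝ := insert 1 (((Finset.range N).filter (fun j => 0 < lam j)).image lam)
      with hF
    have h1F : (1:ℝ) ∈ F := Finset.mem_insert_self _ _
    refine ⟨F.min' ⟨1, h1F⟩, ?_, F.min'_le _ h1F, ?_⟩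
    · refine (Finset.lt_min'_iff _ _).mpr ?_
      intro y hy
      rcases Finset.mem_insert.mp hy with h | h
      · simp [h]
      · obtain ⟨j, hj, rfl⟩ := Finset.mem_image.mp h
        exact (Finset.mem_filter.mp hj).2
    · intro j hj
      by_cases hjN : j < N
      · exact F.min'_le _ (Finset.mem_insert_of_mem (Finset.mem_image.mpr
          ⟨j, Finset.mem_filter.mpr ⟨Finset.mem_range.mpr hjN, hj⟩, rfl⟩))
      · have h2 : lam j > 1 := by
          have := Real.exp_lt_exp.mp (hN j (not_lt.mp hjN)); linarith
        exact (F.min'_le _ h1F).trans h2.le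
  -- Step 3: exponential decay for t ≥ 1
  set M : ℝ := (∑' j, Real.exp (-1 * lam j)) - k with hM
  have hM0 : 0 ≤ M := hg0 1 one_pos
  have hdecay : ∀ t : ℝ, 1 ≤ t →
      (∑' j, Real.exp (-t * lam j)) - k ≤ Real.exp (-δ * (t - 1)) * M := by
    intro t ht
    have ht0 : (0:ℝ) < t := lt_of_lt_of_le one_pos ht
    rw [← (key t ht0).tsum_eq, hM, ← (key 1 one_pos).tsum_eq, ← tsum_mul_left]
    refine Summable.tsum_le_tsum (fun i => ?_) (key t ht0).summable
      ((key 1 one_pos).summable.mul_left _)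
    rw [← Real.exp_add]
    apply Real.exp_le_exp.mpr
    have := hδle i.1 i.2
    nlinarith [i.2, this]
  -- Step 4: measurable ENNReal model of the positive part
  set H : ℝ → ENNReal := fun t => ∑' i : {j : ℕ // 0 < lam j},
    ENNReal.ofReal (Real.exp (-t * lam i.1)) with hHdef
  have hHmeas : Measurable H := by
    apply Measurable.ennreal_tsum
    intro i
    exact (Real.continuous_exp.comp ((continuous_neg.comp continuous_id).mul
      continuous_const)).measurable.ennreal_ofReal
  have hHeq : ∀ t : ℝ, 0 < t → (H t).toReal = (∑' j, Real.exp (-t * lam j)) - k := by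
    intro t ht
    rw [hHdef]
    rw [ENNReal.tsum_toReal_eq (fun a => ENNReal.ofReal_ne_top)]
    simp_rw [ENNReal.toReal_ofReal (Real.exp_nonneg _)]
    exact (key t ht).tsum_eq
  -- Step 5: integrable bound function on (0, ∞)
  set bnd : ℝ → ℝ := fun t => if t ≤ 1 then C * t ^ (z.re - 1 - n / r)
    else (Real.exp δ * M) * (t ^ (z.re - 1) * Real.exp (-δ * t)) with hbnd
  have hbnd_int : IntegrableOn bnd (Set.Ioi 0) := by
    rw [← Set.Ioc_union_Ioi_eq_Ioi (zero_le_one : (0:ℝ) ≤ 1)]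
    apply IntegrableOn.union
    · refine IntegrableOn.congr_fun
        (f := fun t : ℝ => C * t ^ (z.re - 1 - n / r)) ?_ (fun t ht => ?_) measurableSet_Ioc
      · exact (((integrableOn_Ioc_iff_integrableOn_Ioo (f := fun t : ℝ => t ^ (z.re - 1 - n / r)) (b := 1) enorm_ne_top).mpr
          ((intervalIntegral.integrableOn_Ioo_rpow_iff one_pos).mpr (by linarith))).const_mul C)
      · simp only [hbnd, if_pos ht.2]
    · refine IntegrableOn.congr_fun
        (f := fun t : ℝ => (Real.exp δ * M) * (t ^ (z.re - 1) * Real.exp (-δ * t)))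
        ?_ (fun t ht => ?_) measurableSet_Ioi
      · refine Integrable.const_mul ?_ _
        refine IntegrableOn.congr_fun
          (f := fun t : ℝ => t ^ (z.re - 1) * Real.exp (-δ * t ^ (1:ℝ)))
          ?_ (fun t ht => by simp [Real.rpow_one]) measurableSet_Ioi
        exact (integrableOn_rpow_mul_exp_neg_mul_rpow
          (by linarith : (-1:ℝ) < z.re - 1) one_pos hδ0).mono_set
          (Set.Ioi_subset_Ioi zero_le_one)
      · simp only [hbnd, if_neg (not_le.mpr (Set.mem_Ioi.mp ht))]
  -- Step 6: real integrability of t ^ (Re z - 1) * (θ t - k)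
  have hGmeas : AEStronglyMeasurable
      (fun t : ℝ => t ^ (z.re - 1) * ((∑' j, Real.exp (-t * lam j)) - k))
      (volume.restrict (Set.Ioi 0)) := by
    have hm : AEStronglyMeasurable (fun t : ℝ => t ^ (z.re - 1) * (H t).toReal)
        (volume.restrict (Set.Ioi 0)) := by
      refine AEStronglyMeasurable.mul ?_ hHmeas.ennreal_toReal.aestronglyMeasurable
      exact ((continuousOn_id.rpow_const fun x hx =>
        Or.inl (ne_of_gt hx)).aestronglyMeasurable measurableSet_Ioi)
    refine hm.congr ?_
    filter_upwards [ae_restrict_mem measurableSet_Ioi] with t ht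
    rw [hHeq t ht]
  have hGint : IntegrableOn
      (fun t : ℝ => t ^ (z.re - 1) * ((∑' j, Real.exp (-t * lam j)) - k))
      (Set.Ioi 0) := by
    refine Integrable.mono' hbnd_int hGmeas ?_
    filter_upwards [ae_restrict_mem measurableSet_Ioi] with t ht
    have ht0 : (0:ℝ) < t := ht
    have hg := hg0 t ht0
    rw [Real.norm_of_nonneg (mul_nonneg (Real.rpow_nonneg ht0.le _) hg)]
    by_cases h1 : t ≤ 1
    · rw [hbnd]; simp only [if_pos h1]
      calc t ^ (z.re - 1) * ((∑' j, Real.exp (-t * lam j)) - k)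
          ≤ t ^ (z.re - 1) * (C * t ^ (-(n / r))) := by
            refine mul_le_mul_of_nonneg_left ?_ (Real.rpow_nonneg ht0.le _)
            refine le_trans ?_ (hθ t ⟨ht0, h1⟩)
            have : (0:ℝ) ≤ k := Nat.cast_nonneg k
            linarith
        _ = C * t ^ (z.re - 1 - n / r) := by
            rw [← mul_assoc, mul_comm (t ^ (z.re - 1)) C, mul_assoc,
              ← Real.rpow_add ht0]
            ring_nf
    · rw [hbnd]; simp only [if_neg h1]
      push_neg at h1
      calc t ^ (z.re - 1) * ((∑' j, Real.exp (-t * lam j)) - k)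
          ≤ t ^ (z.re - 1) * (Real.exp (-δ * (t - 1)) * M) :=
            mul_le_mul_of_nonneg_left (hdecay t h1.le) (Real.rpow_nonneg ht0.le _)
        _ = (Real.exp δ * M) * (t ^ (z.re - 1) * Real.exp (-δ * t)) := by
            rw [show -δ * (t - 1) = δ + -δ * t by ring, Real.exp_add]
            ring
  -- Step 7: summability of lam ^ (-Re z)
  have hΓpos : 0 < Real.Gamma z.re := Real.Gamma_pos_of_pos hs0
  have hint_i : ∀ i : {j : ℕ // 0 < lam j}, IntegrableOn
      (fun t : ℝ => t ^ (z.re - 1) * Real.exp (-t * lam i.1)) (Set.Ioi 0) := by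
    intro i
    refine (integrableOn_rpow_mul_exp_neg_mul_rpow
      (by linarith : (-1:ℝ) < z.re - 1) one_pos i.2).congr_fun (fun t ht => ?_)
      measurableSet_Ioi
    simp only [Real.rpow_one]; ring_nf
  have hval_i : ∀ i : {j : ℕ // 0 < lam j},
      ∫ t in Set.Ioi (0:ℝ), t ^ (z.re - 1) * Real.exp (-t * lam i.1)
        = Real.Gamma z.re * (lam i.1) ^ (-z.re) := by
    intro i
    have := Real.integral_rpow_mul_exp_neg_mul_Ioi hs0 i.2
    rw [show ∫ t in Set.Ioi (0:ℝ), t ^ (z.re - 1) * Real.exp (-t * lam i.1)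
        = ∫ t in Set.Ioi (0:ℝ), t ^ (z.re - 1) * Real.exp (-(lam i.1 * t)) by
      congr 1; funext t; ring_nf, this, one_div, Real.inv_rpow (hlam i.1),
      ← Real.rpow_neg (hlam i.1), mul_comm]
  have hS1 : Summable (fun i : {j : ℕ // 0 < lam j} => lam i.1 ^ (-z.re)) := by
    refine summable_of_sum_le (c := (Real.Gamma z.re)⁻¹ * ∫ t in Set.Ioi (0:ℝ),
        t ^ (z.re - 1) * ((∑' j, Real.exp (-t * lam j)) - k))
      (fun i => Real.rpow_nonneg (hlam i.1) _) (fun u => ?_)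
    have h1 : Real.Gamma z.re * ∑ i ∈ u, lam i.1 ^ (-z.re)
        = ∫ t in Set.Ioi (0:ℝ), ∑ i ∈ u, t ^ (z.re - 1) * Real.exp (-t * lam i.1) := by
      rw [integral_finset_sum u (fun i _ => hint_i i), Finset.mul_sum]
      exact Finset.sum_congr rfl fun i _ => (hval_i i).symm
    have h2 : ∫ t in Set.Ioi (0:ℝ), ∑ i ∈ u, t ^ (z.re - 1) * Real.exp (-t * lam i.1)
        ≤ ∫ t in Set.Ioi (0:ℝ),
            t ^ (z.re - 1) * ((∑' j, Real.exp (-t * lam j)) - k) := by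
      refine setIntegral_mono_on (integrable_finset_sum u fun i _ => hint_i i)
        hGint measurableSet_Ioi (fun t ht => ?_)
      rw [← Finset.mul_sum]
      refine mul_le_mul_of_nonneg_left ?_ (Real.rpow_nonneg (le_of_lt ht) _)
      rw [← (key t ht).tsum_eq]
      exact Summable.sum_le_tsum u (fun i _ => Real.exp_nonneg _) (key t ht).summable
    have h3 := h1.trans_le h2
    rw [← le_div_iff₀' hΓpos] at h3
    rwa [div_eq_inv_mul] at h3
  -- First conclusion
  have claim1 : Summable fun j : {j : ℕ // 0 < lam j} => ‖(lam j.1 : ℂ) ^ (-z)‖ := by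
    refine hS1.congr fun i => ?_
    rw [Complex.norm_cpow_eq_rpow_re_of_pos i.2, Complex.neg_re]
  -- Second conclusion
  have claim2 : IntegrableOn (fun t : ℝ =>
      (t : ℂ) ^ (z - 1) * (((∑' j, Real.exp (-t * lam j)) - k : ℝ) : ℂ)) (Set.Ioi 0) := by
    refine Integrable.mono' hGint ?_ ?_
    · have hc : AEStronglyMeasurable (fun t : ℝ => (t : ℂ) ^ (z - 1))
          (volume.restrict (Set.Ioi 0)) := by
        refine (ContinuousOn.cpow_const ?_ ?_).aestronglyMeasurable measurableSet_Ioi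
        · exact Complex.continuous_ofReal.continuousOn
        · intro t ht
          exact Or.inl (by simpa using (ht : (0:ℝ) < t))
      refine hc.mul ?_
      have : AEStronglyMeasurable (fun t : ℝ => (((H t).toReal : ℝ) : ℂ))
          (volume.restrict (Set.Ioi 0)) :=
        (Complex.continuous_ofReal.measurable.comp hHmeas.ennreal_toReal).aestronglyMeasurable
      refine this.congr ?_
      filter_upwards [ae_restrict_mem measurableSet_Ioi] with t ht
      rw [hHeq t ht]
    · filter_upwards [ae_restrict_mem measurableSet_Ioi] with t ht
      have ht0 : (0:ℝ) < t := ht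
      rw [norm_mul, Complex.norm_real, Real.norm_eq_abs,
        Complex.norm_cpow_eq_rpow_re_of_pos ht0,
        abs_of_nonneg (hg0 t ht0), Complex.sub_re, Complex.one_re]
  refine ⟨claim1, claim2, ?_⟩
  -- Third conclusion via hasSum_mellin
  have hmellin := hasSum_mellin (ι := {j : ℕ // 0 < lam j})
    (a := fun _ => (1:ℂ)) (p := fun i => lam i.1)
    (F := fun t => (((∑' j, Real.exp (-t * lam j)) - k : ℝ) : ℂ)) (s := z)
    (fun i => Or.inr i.2) hs0
    (fun t ht => by
      have := (Complex.hasSum_ofReal (f := fun i : {j : ℕ // 0 < lam j} =>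
        Real.exp (-t * lam i.1))).mpr (key t ht)
      refine this.congr_fun fun i => ?_
      push_cast
      rw [one_mul, neg_mul, neg_mul, mul_comm])
    (by
      refine hS1.congr fun i => ?_
      rw [norm_one, Real.rpow_neg (hlam i.1), one_div])
  have hsummC : Summable (fun i : {j : ℕ // 0 < lam j} => (lam i.1 : ℂ) ^ (-z)) :=
    claim1.of_norm
  have heq2 : HasSum (fun i : {j : ℕ // 0 < lam j} =>
      Complex.Gamma z * (lam i.1 : ℂ) ^ (-z))
      (mellin (fun t => (((∑' j, Real.exp (-t * lam j)) - k : ℝ) : ℂ)) z) := by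
    refine hmellin.congr_fun fun i => ?_
    rw [mul_one, Complex.cpow_neg, div_eq_mul_inv]
  have h4 := (hsummC.hasSum.mul_left (Complex.Gamma z)).unique heq2
  have hΓne : Complex.Gamma z ≠ 0 := Complex.Gamma_ne_zero_of_re_pos hs0
  have hm : mellin (fun t => (((∑' j, Real.exp (-t * lam j)) - k : ℝ) : ℂ)) z
      = ∫ t in Set.Ioi (0:ℝ),
          (t : ℂ) ^ (z - 1) * (((∑' j, Real.exp (-t * lam j)) - k : ℝ) : ℂ) := by
    simp [mellin, smul_eq_mul]
  rw [← hm, ← h4, ← mul_assoc, inv_mul_cancel₀ hΓne, one_mul]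
end

section
/- Let λ : ℕ → ℝ with λ_j ≥ 0 for all j, and suppose that for every t > 0 the series θ(t) := Σ_j exp(−t λ_j) converges. Then the set {j : λ_j = 0} is finite with cardinality k, the function θ(t) tends to k as t → ∞, and moreover there exist ε > 0 and C ≥ 0 such that |θ(t) − k| ≤ C·exp(−ε t) for all t ≥ 1. -/
open Filter

/-- Heat-trace form of Lemma 5.2: if the heat trace `θ(t) = Σ_j e^{-t λ_j}` of a
non-negative eigenvalue sequence converges for all `t > 0`, then the set of zero
eigenvalues is finite with cardinality `k`, `θ(t) → k` as `t → ∞`, and in fact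
`|θ(t) - k| ≤ C e^{-ε t}` for `t ≥ 1`, for some `ε > 0` and `C ≥ 0`. -/
theorem stmt_8 (lam : ℕ → ℝ) (hlam : ∀ j, 0 ≤ lam j)
    (hsum : ∀ t : ℝ, 0 < t → Summable fun j => Real.exp (-t * lam j)) :
    {j : ℕ | lam j = 0}.Finite ∧
    Tendsto (fun t : ℝ => ∑' j, Real.exp (-t * lam j)) atTop
      (nhds ({j : ℕ | lam j = 0}.ncard : ℝ)) ∧
    ∃ ε > (0 : ℝ), ∃ C : ℝ, 0 ≤ C ∧ ∀ t : ℝ, 1 ≤ t →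
      |(∑' j, Real.exp (-t * lam j)) - ({j : ℕ | lam j = 0}.ncard : ℝ)|
        ≤ C * Real.exp (-ε * t) := by
  set S : Set ℕ := {j : ℕ | lam j = 0} with hS
  have hsum1 : Summable fun j => Real.exp (-1 * lam j) := hsum 1 one_pos
  have hcof : Tendsto (fun j => Real.exp (-1 * lam j)) cofinite (nhds 0) :=
    hsum1.tendsto_cofinite_zero
  have h1 : ∀ᶠ j in cofinite, Real.exp (-1 * lam j) < Real.exp (-1) :=
    hcof.eventually (eventually_lt_nhds (Real.exp_pos (-1)))
  have hfin1 : {j : ℕ | lam j ≤ 1}.Finite := by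
    refine (eventually_cofinite.mp h1).subset ?_
    intro j hj
    simp only [Set.mem_setOf_eq] at hj ⊢
    intro hlt
    have : -1 ≤ -1 * lam j := by nlinarith
    exact absurd hlt (not_lt.mpr (Real.exp_le_exp.mpr this))
  have hSfin : S.Finite := hfin1.subset (by intro j hj; simp only [Set.mem_setOf_eq] at hj ⊢; rw [hj]; norm_num)
  have hTfin : {j : ℕ | 0 < lam j ∧ lam j ≤ 1}.Finite :=
    hfin1.subset (fun j hj => hj.2)
  set F : Finset ℕ := hTfin.toFinset with hF
  set E : Finset ℝ := insert (1 : ℝ) (F.image lam) with hE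
  have hEne : E.Nonempty := Finset.insert_nonempty _ _
  set ε : ℝ := E.min' hEne with hεdef
  have hεpos : 0 < ε := by
    rw [Finset.lt_min'_iff]
    intro b hb
    rcases Finset.mem_insert.mp hb with h | h
    · simp [h]
    · rcases Finset.mem_image.mp h with ⟨j, hj, rfl⟩
      exact (hTfin.mem_toFinset.mp hj).1
  have hεle : ∀ j, lam j ≠ 0 → ε ≤ lam j := by
    intro j hj
    have hjpos : 0 < lam j := lt_of_le_of_ne (hlam j) (Ne.symm hj)
    by_cases h1j : lam j ≤ 1
    · exact Finset.min'_le _ _ (Finset.mem_insert.mpr (Or.inr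
        (Finset.mem_image.mpr ⟨j, hTfin.mem_toFinset.mpr ⟨hjpos, h1j⟩, rfl⟩)))
    · exact le_trans (Finset.min'_le _ _ (Finset.mem_insert_self _ _)) (le_of_not_ge h1j)
  set θ1 : ℝ := ∑' j, Real.exp (-1 * lam j) with hθ1
  have hθ1nn : 0 ≤ θ1 := tsum_nonneg (fun j => (Real.exp_pos _).le)
  set C : ℝ := Real.exp ε * θ1 with hC
  have hCnn : 0 ≤ C := mul_nonneg (Real.exp_pos _).le hθ1nn
  -- key identity: θ t - k = sum over complement, for t > 0
  have hsplit : ∀ t : ℝ, 0 < t →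
      (∑' j, Real.exp (-t * lam j)) - (S.ncard : ℝ)
        = ∑' j : ↥Sᶜ, Real.exp (-t * lam (j : ℕ)) := by
    intro t ht
    have hst := hsum t ht
    have h := hst.tsum_subtype_add_tsum_subtype_compl S
    have hSsum : (∑' j : S, Real.exp (-t * lam (j : ℕ))) = (S.ncard : ℝ) := by
      have : (fun j : S => Real.exp (-t * lam (j : ℕ))) = fun _ : S => (1 : ℝ) := by
        funext j
        have : lam (j : ℕ) = 0 := j.2
        simp [this]
      rw [this, tsum_const, Nat.card_coe_set_eq]
      simp
    linarith [h, hSsum.symm ▸ h]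
  have hbound : ∀ t : ℝ, 1 ≤ t →
      |(∑' j, Real.exp (-t * lam j)) - (S.ncard : ℝ)| ≤ C * Real.exp (-ε * t) := by
    intro t ht
    have htpos : (0 : ℝ) < t := lt_of_lt_of_le one_pos ht
    rw [hsplit t htpos]
    have hnn : 0 ≤ ∑' j : ↥Sᶜ, Real.exp (-t * lam (j : ℕ)) :=
      tsum_nonneg (fun j => (Real.exp_pos _).le)
    rw [abs_of_nonneg hnn]
    have hterm : ∀ j : ↥Sᶜ, Real.exp (-t * lam (j : ℕ))
        ≤ Real.exp (-(t - 1) * ε) * Real.exp (-1 * lam (j : ℕ)) := by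
      intro j
      have hjne : lam (j : ℕ) ≠ 0 := j.2
      have hεj : ε ≤ lam (j : ℕ) := hεle _ hjne
      rw [← Real.exp_add, Real.exp_le_exp]
      nlinarith
    have hsub1 : Summable fun j : ↥Sᶜ => Real.exp (-1 * lam (j : ℕ)) :=
      hsum1.subtype _
    have hsubt : Summable fun j : ↥Sᶜ => Real.exp (-t * lam (j : ℕ)) :=
      (hsum t htpos).subtype _
    calc (∑' j : ↥Sᶜ, Real.exp (-t * lam (j : ℕ)))
        ≤ ∑' j : ↥Sᶜ, Real.exp (-(t - 1) * ε) * Real.exp (-1 * lam (j : ℕ)) :=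
          hsubt.tsum_le_tsum hterm (hsub1.mul_left _)
      _ = Real.exp (-(t - 1) * ε) * ∑' j : ↥Sᶜ, Real.exp (-1 * lam (j : ℕ)) :=
          tsum_mul_left
      _ ≤ Real.exp (-(t - 1) * ε) * θ1 := by
          refine mul_le_mul_of_nonneg_left ?_ (Real.exp_pos _).le
          exact hsub1.tsum_le_tsum_of_inj _ Subtype.val_injective
            (fun c _ => (Real.exp_pos _).le) (fun j => le_rfl) hsum1
      _ = C * Real.exp (-ε * t) := by
          rw [hC]
          rw [show (-(t - 1) * ε) = ε + (-ε * t) by ring, Real.exp_add]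
          ring
  refine ⟨hSfin, ?_, ⟨ε, hεpos, C, hCnn, hbound⟩⟩
  have hbnd0 : Tendsto (fun t : ℝ => C * Real.exp (-ε * t)) atTop (nhds 0) := by
    have h1 : Tendsto (fun t : ℝ => -ε * t) atTop atBot := by
      have h0 : Tendsto (fun t : ℝ => ε * t) atTop atTop :=
        (tendsto_const_mul_atTop_of_pos hεpos).2 tendsto_id
      have h2 : Tendsto (fun t : ℝ => -(ε * t)) atTop atBot := tendsto_neg_atBot_iff.mpr h0
      simpa [neg_mul] using h2
    have := (Real.tendsto_exp_atBot.comp h1).const_mul C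
    simpa using this
  have hdiff : Tendsto (fun t : ℝ => (∑' j, Real.exp (-t * lam j)) - (S.ncard : ℝ))
      atTop (nhds 0) := by
    apply squeeze_zero_norm' _ hbnd0
    filter_upwards [eventually_ge_atTop (1 : ℝ)] with t ht
    simpa [Real.norm_eq_abs] using hbound t ht
  exact tendsto_sub_nhds_zero_iff.mp hdiff
end

section
/- Let E and F be finite-dimensional complex inner product spaces and let D : E →L[ℂ] F be a linear map with adjoint D* : F →L[ℂ] E. Then for every t ∈ ℝ, trace(exp(−t • (D* ∘ D))) − trace(exp(−t • (D ∘ D*))) = (dim ker D : ℂ) − (dim ker D* : ℂ), where exp denotes the exponential in the algebras of endomorphisms of E and of F. -/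
lemma ms_ker_adjoint {E F : Type*}
    [NormedAddCommGroup E] [InnerProductSpace ℂ E] [FiniteDimensional ℂ E]
    [NormedAddCommGroup F] [InnerProductSpace ℂ F] [FiniteDimensional ℂ F]
    (A : E →L[ℂ] F) :
    LinearMap.ker ((ContinuousLinearMap.adjoint A : F →L[ℂ] E) : F →ₗ[ℂ] E) = (LinearMap.range (A : E →ₗ[ℂ] F))ᗮ := by
  ext x
  simp only [LinearMap.mem_ker, Submodule.mem_orthogonal, ContinuousLinearMap.coe_coe]
  constructor
  · rintro h u ⟨y, rfl⟩
    rw [ContinuousLinearMap.coe_coe, ← ContinuousLinearMap.adjoint_inner_right, h, inner_zero_right]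
  · intro h
    rw [← inner_self_eq_zero (𝕜 := ℂ), ContinuousLinearMap.adjoint_inner_left,
      ← inner_conj_symm]
    rw [show A ((ContinuousLinearMap.adjoint A) x) = (A : E →ₗ[ℂ] F) ((ContinuousLinearMap.adjoint A) x) from rfl,
      h _ ⟨_, rfl⟩, map_zero]

lemma ms_mul_pow {M : Type*} [Monoid M] (a b : M) (n : ℕ) :
    (a * b) ^ (n + 1) = a * ((b * a) ^ n * b) := by
  induction n with
  | zero => simp
  | succ n ih =>
    rw [pow_succ, ih, pow_succ]
    simp [mul_assoc]

lemma ms_coe_pow {V : Type*} [NormedAddCommGroup V] [InnerProductSpace ℂ V]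
    (M : V →L[ℂ] V) (n : ℕ) :
    ((M ^ n : V →L[ℂ] V) : V →ₗ[ℂ] V) = (M : V →ₗ[ℂ] V) ^ n := by
  induction n with
  | zero => rfl
  | succ n ih => rw [pow_succ, pow_succ, ← ih]; rfl

lemma ms_trace_exp {V : Type*} [NormedAddCommGroup V] [InnerProductSpace ℂ V]
    [FiniteDimensional ℂ V] (M : V →L[ℂ] V) :
    LinearMap.trace ℂ V ((NormedSpace.exp M : V →L[ℂ] V) : V →ₗ[ℂ] V)
      = ∑' n : ℕ, ((Nat.factorial n : ℂ))⁻¹ • LinearMap.trace ℂ V ((M : V →ₗ[ℂ] V) ^ n) := by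
  let L : (V →L[ℂ] V) →ₗ[ℂ] ℂ :=
    (LinearMap.trace ℂ V).comp (ContinuousLinearMap.coeLM ℂ)
  let L' : (V →L[ℂ] V) →L[ℂ] ℂ := LinearMap.toContinuousLinearMap L
  have hL : ∀ N : V →L[ℂ] V, L' N = LinearMap.trace ℂ V (N : V →ₗ[ℂ] V) := fun N => rfl
  rw [← hL, NormedSpace.exp_eq_tsum (𝕂 := ℂ)]
  rw [L'.map_tsum (NormedSpace.expSeries_summable' (𝕂 := ℂ) M)]
  congr 1
  ext n
  rw [map_smul, hL, ms_coe_pow]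

lemma ms_comp_pow {E F : Type*} [AddCommGroup E] [Module ℂ E] [AddCommGroup F] [Module ℂ F]
    (a : F →ₗ[ℂ] E) (b : E →ₗ[ℂ] F) (n : ℕ) :
    (a ∘ₗ b) ^ (n + 1) = a ∘ₗ (((b ∘ₗ a) ^ n) ∘ₗ b) := by
  induction n with
  | zero => simp [pow_zero, Module.End.one_eq_id, LinearMap.id_comp]
  | succ n ih =>
    rw [pow_succ, ih, pow_succ]
    simp only [Module.End.mul_eq_comp, LinearMap.comp_assoc]

lemma ms_summable {V : Type*} [NormedAddCommGroup V] [InnerProductSpace ℂ V]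
    [FiniteDimensional ℂ V] (M : V →L[ℂ] V) :
    Summable (fun n : ℕ =>
      ((Nat.factorial n : ℂ))⁻¹ • LinearMap.trace ℂ V ((M : V →ₗ[ℂ] V) ^ n)) := by
  let L : (V →L[ℂ] V) →ₗ[ℂ] ℂ :=
    (LinearMap.trace ℂ V).comp (ContinuousLinearMap.coeLM ℂ)
  let L' : (V →L[ℂ] V) →L[ℂ] ℂ := LinearMap.toContinuousLinearMap L
  have := (NormedSpace.expSeries_summable' (𝕂 := ℂ) M).map L' L'.continuous
  convert this using 2 with n
  show _ = L' (((Nat.factorial n : ℂ))⁻¹ • M ^ n)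
  rw [map_smul]
  congr 1
  exact (congrArg (LinearMap.trace ℂ V) (ms_coe_pow M n)).symm

/-- McKean–Singer formula in the finite-dimensional setting: for a linear map `D`
between finite-dimensional complex inner product spaces, the supertrace
`tr(e^{-t D*D}) - tr(e^{-t DD*})` is independent of `t` and equals
`dim ker D - dim ker D*`. -/
theorem stmt_9 {E F : Type*}
    [NormedAddCommGroup E] [InnerProductSpace ℂ E] [FiniteDimensional ℂ E]
    [NormedAddCommGroup F] [InnerProductSpace ℂ F] [FiniteDimensional ℂ F]
    (D : E →L[ℂ] F) :
    ∀ t : ℝ,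
      LinearMap.trace ℂ E
          ((NormedSpace.exp ((-(t : ℂ)) • ((ContinuousLinearMap.adjoint D).comp D)) :
            E →L[ℂ] E) : E →ₗ[ℂ] E)
        - LinearMap.trace ℂ F
          ((NormedSpace.exp ((-(t : ℂ)) • (D.comp (ContinuousLinearMap.adjoint D))) :
            F →L[ℂ] F) : F →ₗ[ℂ] F)
      = (Module.finrank ℂ (LinearMap.ker (D : E →ₗ[ℂ] F)) : ℂ)
        - (Module.finrank ℂ (LinearMap.ker ((ContinuousLinearMap.adjoint D : F →L[ℂ] E) : F →ₗ[ℂ] E)) : ℂ) := by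
  intro t
  set D' := ContinuousLinearMap.adjoint D with hD'
  set A : E →L[ℂ] E := (-(t : ℂ)) • (D'.comp D) with hA
  set B : F →L[ℂ] F := (-(t : ℂ)) • (D.comp D') with hB
  -- trace identities
  rw [ms_trace_exp A, ms_trace_exp B, ← Summable.tsum_sub (ms_summable A) (ms_summable B)]
  -- coercions to linear endomorphisms
  set d : E →ₗ[ℂ] F := (D : E →ₗ[ℂ] F)
  set d' : F →ₗ[ℂ] E := (D' : F →ₗ[ℂ] E)
  have hAcoe : (A : E →ₗ[ℂ] E) = (-(t : ℂ)) • (d' ∘ₗ d) := rfl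
  have hBcoe : (B : F →ₗ[ℂ] F) = (-(t : ℂ)) • (d ∘ₗ d') := rfl
  have key : ∀ n : ℕ, n ≠ 0 →
      ((Nat.factorial n : ℂ))⁻¹ • LinearMap.trace ℂ E ((A : E →ₗ[ℂ] E) ^ n)
        - ((Nat.factorial n : ℂ))⁻¹ • LinearMap.trace ℂ F ((B : F →ₗ[ℂ] F) ^ n) = 0 := by
    intro n hn
    obtain ⟨m, rfl⟩ := Nat.exists_eq_succ_of_ne_zero hn
    rw [hAcoe, hBcoe, smul_pow, smul_pow, map_smul, map_smul]
    rw [ms_comp_pow d' d m, LinearMap.trace_comp_comm', LinearMap.comp_assoc,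
      ← Module.End.mul_eq_comp ((d ∘ₗ d') ^ m), ← pow_succ]
    rw [sub_self]
  rw [tsum_eq_single 0 (by intro n hn; exact key n hn)]
  -- n = 0 term
  have h0 : ((Nat.factorial 0 : ℂ))⁻¹ • LinearMap.trace ℂ E ((A : E →ₗ[ℂ] E) ^ 0)
      - ((Nat.factorial 0 : ℂ))⁻¹ • LinearMap.trace ℂ F ((B : F →ₗ[ℂ] F) ^ 0)
      = (Module.finrank ℂ E : ℂ) - (Module.finrank ℂ F : ℂ) := by
    simp [LinearMap.trace_one]
  rw [h0]
  -- dimension count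
  have hkerD' : LinearMap.ker (D' : F →ₗ[ℂ] E) = (LinearMap.range (D : E →ₗ[ℂ] F))ᗮ := ms_ker_adjoint D
  have hkerD : LinearMap.ker (D : E →ₗ[ℂ] F) = (LinearMap.range (D' : F →ₗ[ℂ] E))ᗮ := by
    have := ms_ker_adjoint D'
    rwa [hD', ContinuousLinearMap.adjoint_adjoint] at this
  have h1 : Module.finrank ℂ (LinearMap.range (D : E →ₗ[ℂ] F)) + Module.finrank ℂ (LinearMap.ker (D : E →ₗ[ℂ] F))
      = Module.finrank ℂ E := LinearMap.finrank_range_add_finrank_ker (D : E →ₗ[ℂ] F)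
  have h2 : Module.finrank ℂ (LinearMap.range (D : E →ₗ[ℂ] F))
      + Module.finrank ℂ (LinearMap.ker (D' : F →ₗ[ℂ] E)) = Module.finrank ℂ F := by
    rw [hkerD']; exact Submodule.finrank_add_finrank_orthogonal _
  have h3 : Module.finrank ℂ (LinearMap.range (D' : F →ₗ[ℂ] E))
      + Module.finrank ℂ (LinearMap.ker (D : E →ₗ[ℂ] F)) = Module.finrank ℂ E := by
    rw [hkerD]; exact Submodule.finrank_add_finrank_orthogonal _
  have hnat : Module.finrank ℂ E + Module.finrank ℂ (LinearMap.ker (D' : F →ₗ[ℂ] E))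
      = Module.finrank ℂ (LinearMap.ker (D : E →ₗ[ℂ] F)) + Module.finrank ℂ F := by omega
  rw [sub_eq_sub_iff_add_eq_add]
  exact_mod_cast hnat
end
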